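/- Under the model and Conditions A1–A7, with V = R^{-1}, all three families of matrices Ṽ_R = V(I−S_d), Ṽ_L = (I−S_d)ᵀV and Ṽ = (I−S_d)ᵀV(I−S_d) are AVUS, i.e., their absolute row sums and absolute column sums are bounded by a constant uniformly in n. -/

import Mathlib

open MeasureTheory ProbabilityTheory Filter Matrix

noncomputable section

/-- Design points `t_i = i/n`, `i = 1,…,n` (here `0`-indexed: `dpt n i = (i+1)/n`). -/
def dpt (n : ℕ) (i : Fin n) : ℝ := ((i : ℕ) + 1) / n

/-- The rescaled kernel `K_b(t) = K(t/b)/b`. -/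
def scaledKer (K : ℝ → ℝ) (b t : ℝ) : ℝ := K (t / b) / b

/-- The `2 × 2` matrix `X(t_i)ᵀ W(t_i) X(t_i)` of local linear regression. -/
def locMat (K : ℝ → ℝ) (b : ℝ) (n : ℕ) (i : Fin n) : Matrix (Fin 2) (Fin 2) ℝ :=
  Matrix.of fun a c =>
    ∑ j : Fin n, scaledKer K b (dpt n j - dpt n i) * (dpt n j - dpt n i) ^ ((a : ℕ) + (c : ℕ))

/-- The local linear smoothing matrix `S_d`:
`S_d(i,j) = (1,0){X(tᵢ)ᵀW(tᵢ)X(tᵢ)}⁻¹(1, tⱼ-tᵢ)ᵀ K_b(tⱼ-tᵢ)`. -/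
def smoothMat (K : ℝ → ℝ) (b : ℝ) (n : ℕ) : Matrix (Fin n) (Fin n) ℝ :=
  Matrix.of fun i j =>
    ((locMat K b n i)⁻¹ *ᵥ ![1, dpt n j - dpt n i]) 0 * scaledKer K b (dpt n j - dpt n i)

/-- `χ²_k`: the law of the sum of squares of `k` i.i.d. standard normal random variables. -/
def chiSq (k : ℕ) : Measure ℝ :=
  (Measure.pi fun _ : Fin k => gaussianReal 0 1).map fun x => ∑ i, x i ^ 2

/-- Convergence in distribution (weak convergence of laws) of real random variables. -/
def TendstoInDistribution {Ω : Type*} [MeasurableSpace Ω] (μ : Measure Ω)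
    (X : ℕ → Ω → ℝ) (ν : Measure ℝ) : Prop :=
  ∀ φ : BoundedContinuousFunction ℝ ℝ,
    Tendsto (fun n => ∫ ω, φ (X n ω) ∂μ) atTop (nhds (∫ x, φ x ∂ν))

/-- Convergence in probability to a constant. -/
def TendstoInProbability {Ω : Type*} [MeasurableSpace Ω] (μ : Measure Ω)
    (X : ℕ → Ω → ℝ) (c : ℝ) : Prop :=
  ∀ δ : ℝ, 0 < δ → Tendsto (fun n => μ {ω | δ ≤ |X n ω - c|}) atTop (nhds 0)

/-- The `ℓ∞` (maximum absolute row sum) norm of a matrix. -/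
def infNorm {n : ℕ} (B : Matrix (Fin n) (Fin n) ℝ) : ℝ := ⨆ i, ∑ j, |B i j|

/-- The fMRI semiparametric model `y = S₁h₁ + ⋯ + S_r h_r + d + ε` together with
Conditions A1–A7. -/
structure FMRICore (Ω : Type) [MeasurableSpace Ω] (μ : Measure Ω) where
  isProb : IsProbabilityMeasure μ
  /-- number of stimulus types -/
  r : ℕ
  /-- length of the (nonzero part of the) HRF -/
  m : ℕ
  /-- dependence range of the errors -/
  g : ℕ
  hr : 0 < r
  hm : 0 < m
  /-- half-width of the kernel support -/
  L : ℝ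
  hL : 0 < L
  /-- the kernel -/
  K : ℝ → ℝ
  /-- the bandwidths -/
  b : ℕ → ℝ
  /-- the stimulus processes -/
  s : Fin r → ℝ → Ω → ℝ
  /-- presence probabilities of the stimuli -/
  p : Fin r → ℝ
  /-- the error process -/
  ε : ℕ → Ω → ℝ
  /-- the drift function -/
  d : ℝ → ℝ
  /-- error variance `σ²` -/
  σ2 : ℝ
  /-- the HRF parameter vector (possibly depending on `n`) -/
  h : ℕ → Fin r × Fin m → ℝ
  -- Condition A1: the drift has a bounded continuous second derivative
  hd_smooth : ContDiff ℝ 2 d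
  hd_bdd : ∃ C, ∀ t, |iteratedDeriv 2 d t| ≤ C
  -- Condition A2: the kernel is a symmetric probability density with compact support
  -- `[-L, L]`, Lipschitz continuous and bounded
  hK_symm : ∀ t, K (-t) = K t
  hK_lip : ∃ CK : NNReal, LipschitzWith CK K
  hK_nonneg : ∀ t, 0 ≤ K t
  hK_bdd : ∃ C, ∀ t, K t ≤ C
  hK_supp : ∀ t, L < |t| → K t = 0
  hK_density : ∫ t, K t = 1
  -- Condition A3: the errors form a stationary `g`-dependent sequence, with mean 0,
  -- variance `σ² ∈ (0,∞)`, finite fourth moment, and the eigenvalues of the correlation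
  -- matrix `R` are bounded away from 0 and ∞ uniformly in `n`
  hε_meas : ∀ i, Measurable (ε i)
  hε_stat : ∀ len shift : ℕ,
    μ.map (fun ω => fun i : Fin len => ε ((i : ℕ) + shift) ω) =
      μ.map fun ω => fun i : Fin len => ε (i : ℕ) ω
  hε_gdep : ∀ k : ℕ,
    IndepFun (fun ω => fun i : Fin (k + 1) => ε (i : ℕ) ω)
      (fun ω => fun i : ℕ => ε (k + g + 1 + i) ω) μ
  hε_mean : ∀ i, ∫ ω, ε i ω ∂μ = 0
  hσ2_pos : 0 < σ2
  hε_var : ∀ i, ∫ ω, ε i ω ^ 2 ∂μ = σ2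
  hε_mom4 : Integrable (fun ω => ε 0 ω ^ 4) μ
  /-- uniform lower bound for the eigenvalues of `R` -/
  ra : ℝ
  /-- uniform upper bound for the eigenvalues of `R` -/
  rb : ℝ
  hra : 0 < ra
  hR_eig : ∀ (n : ℕ) (x : Fin n → ℝ),
    ra * ∑ i, x i ^ 2 ≤
        x ⬝ᵥ ((Matrix.of fun i j : Fin n => (∫ ω, ε (i : ℕ) ω * ε (j : ℕ) ω ∂μ) / σ2) *ᵥ x) ∧
      x ⬝ᵥ ((Matrix.of fun i j : Fin n => (∫ ω, ε (i : ℕ) ω * ε (j : ℕ) ω ∂μ) / σ2) *ᵥ x) ≤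
        rb * ∑ i, x i ^ 2
  -- Condition A4: the stimuli are 0/1-valued, stationary with `P{s_j(t)=1} = p_j ∈ (0,1)`,
  -- `∑ p_j < 1`, independent at distinct time points, and independent of the error process
  hs_meas : ∀ j τ, Measurable (s j τ)
  hs_01 : ∀ j τ ω, s j τ ω = 0 ∨ s j τ ω = 1
  hp_pos : ∀ j, 0 < p j
  hp_lt : ∀ j, p j < 1
  hp_sum : ∑ j, p j < 1
  hs_mean : ∀ j τ, ∫ ω, s j τ ω ∂μ = p j
  hs_indep : ∀ j₁ j₂ τ₁ τ₂, τ₁ ≠ τ₂ → IndepFun (s j₁ τ₁) (s j₂ τ₂) μ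
  hsε_indep :
    IndepFun (fun ω => fun q : Fin r × ℝ => s q.1 q.2 ω) (fun ω => fun i : ℕ => ε i ω) μ
  -- Condition A5: bandwidth asymptotics `b → 0`, `nb → ∞`
  hb_pos : ∀ n, 0 < b n
  hb_lim : Tendsto b atTop (nhds 0)
  hnb_lim : Tendsto (fun n : ℕ => (n : ℝ) * b n) atTop atTop
  -- Condition A7: `cov(Sᵀ, Sᵀ) > 0`
  hScov : ∀ τ : ℝ, Matrix.PosDef (Matrix.of fun a c : Fin r × Fin m =>
    if a.2 = c.2 then (∫ ω, s a.1 τ ω * s c.1 τ ω ∂μ) - p a.1 * p c.1 else 0)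

namespace FMRICore

variable {Ω : Type} [MeasurableSpace Ω] {μ : Measure Ω} (M : FMRICore Ω μ)

/-- The true correlation matrix `R` of the errors: `cov(ε) = σ²R`. -/
def Rmat (n : ℕ) : Matrix (Fin n) (Fin n) ℝ :=
  Matrix.of fun i j => (∫ ω, M.ε (i : ℕ) ω * M.ε (j : ℕ) ω ∂μ) / M.σ2

/-- The local linear smoothing matrix `S_d` for sample size `n`. -/
def Sd (n : ℕ) : Matrix (Fin n) (Fin n) ℝ := smoothMat M.K (M.b n) n

/-- The `n × (rm)` Toeplitz design matrix `S = [S₁, …, S_r]`,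
with `S_j(k, ℓ) = s_j(t_k − t_ℓ)` for `k ≥ ℓ` and `0` otherwise. -/
def Smat (n : ℕ) (ω : Ω) : Matrix (Fin n) (Fin M.r × Fin M.m) ℝ :=
  Matrix.of fun k q =>
    if (q.2 : ℕ) ≤ (k : ℕ) then M.s q.1 ((((k : ℕ) : ℝ) - ((q.2 : ℕ) : ℝ)) / n) ω else 0

/-- `S̃ = (I − S_d) S`. -/
def Stil (n : ℕ) (ω : Ω) : Matrix (Fin n) (Fin M.r × Fin M.m) ℝ :=
  (1 - M.Sd n) * M.Smat n ω

/-- The observed data `y = Sh + d + ε`. -/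
def yvec (n : ℕ) (ω : Ω) : Fin n → ℝ :=
  fun i => (M.Smat n ω *ᵥ M.h n) i + M.d (dpt n i) + M.ε (i : ℕ) ω

/-- `ỹ = (I − S_d) y`. -/
def ytil (n : ℕ) (ω : Ω) : Fin n → ℝ := (1 - M.Sd n) *ᵥ M.yvec n ω

/-- The weighted least squares estimator `ĥ = (S̃ᵀR̂⁻¹S̃)⁻¹ S̃ᵀ R̂⁻¹ ỹ`. -/
def hhat (Rh : (n : ℕ) → Ω → Matrix (Fin n) (Fin n) ℝ) (n : ℕ) (ω : Ω) :
    Fin M.r × Fin M.m → ℝ :=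
  ((M.Stil n ω)ᵀ * (Rh n ω)⁻¹ * M.Stil n ω)⁻¹ *ᵥ
    ((M.Stil n ω)ᵀ *ᵥ ((Rh n ω)⁻¹ *ᵥ M.ytil n ω))

/-- The residual vector `r̂ = ỹ − S̃ĥ`. -/
def rhat (Rh : (n : ℕ) → Ω → Matrix (Fin n) (Fin n) ℝ) (n : ℕ) (ω : Ω) : Fin n → ℝ :=
  M.ytil n ω - M.Stil n ω *ᵥ M.hhat Rh n ω

/-- The semiparametric test statistic `𝕂`. -/
def Kstat {k : ℕ} (Rh : (n : ℕ) → Ω → Matrix (Fin n) (Fin n) ℝ)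
    (A : Matrix (Fin k) (Fin M.r × Fin M.m) ℝ) (n : ℕ) (ω : Ω) : ℝ :=
  ((A *ᵥ M.hhat Rh n ω) ⬝ᵥ
      ((A * ((M.Stil n ω)ᵀ * (Rh n ω)⁻¹ * M.Stil n ω)⁻¹ * Aᵀ)⁻¹ *ᵥ (A *ᵥ M.hhat Rh n ω))) /
    ((M.rhat Rh n ω ⬝ᵥ ((Rh n ω)⁻¹ *ᵥ M.rhat Rh n ω)) / ((n : ℝ) - (M.r : ℝ) * (M.m : ℝ)))

/-- The estimated drift `d̂ = S_d (y − Sĥ)`. -/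
def dhat (Rh : (n : ℕ) → Ω → Matrix (Fin n) (Fin n) ℝ) (n : ℕ) (ω : Ω) : Fin n → ℝ :=
  M.Sd n *ᵥ (M.yvec n ω - M.Smat n ω *ᵥ M.hhat Rh n ω)

/-- `d̂̃ = (I − S_d) d̂`. -/
def dtil (Rh : (n : ℕ) → Ω → Matrix (Fin n) (Fin n) ℝ) (n : ℕ) (ω : Ω) : Fin n → ℝ :=
  (1 - M.Sd n) *ᵥ M.dhat Rh n ω

/-- The bias-corrected estimator `ĥ_bc = ĥ − (S̃ᵀR̂⁻¹S̃)⁻¹ S̃ᵀ R̂⁻¹ d̂̃`. -/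
def hhatbc (Rh : (n : ℕ) → Ω → Matrix (Fin n) (Fin n) ℝ) (n : ℕ) (ω : Ω) :
    Fin M.r × Fin M.m → ℝ :=
  M.hhat Rh n ω - ((M.Stil n ω)ᵀ * (Rh n ω)⁻¹ * M.Stil n ω)⁻¹ *ᵥ
    ((M.Stil n ω)ᵀ *ᵥ ((Rh n ω)⁻¹ *ᵥ M.dtil Rh n ω))

/-- The bias-corrected residual `r̂_bc = r̂ − d̂̃`. -/
def rhatbc (Rh : (n : ℕ) → Ω → Matrix (Fin n) (Fin n) ℝ) (n : ℕ) (ω : Ω) : Fin n → ℝ :=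
  M.rhat Rh n ω - M.dtil Rh n ω

/-- The bias-corrected test statistic `𝕂_bc`. -/
def Kbc {k : ℕ} (Rh : (n : ℕ) → Ω → Matrix (Fin n) (Fin n) ℝ)
    (A : Matrix (Fin k) (Fin M.r × Fin M.m) ℝ) (n : ℕ) (ω : Ω) : ℝ :=
  ((A *ᵥ M.hhatbc Rh n ω) ⬝ᵥ
      ((A * ((M.Stil n ω)ᵀ * (Rh n ω)⁻¹ * M.Stil n ω)⁻¹ * Aᵀ)⁻¹ *ᵥ (A *ᵥ M.hhatbc Rh n ω))) /
    ((M.rhatbc Rh n ω ⬝ᵥ ((Rh n ω)⁻¹ *ᵥ M.rhatbc Rh n ω)) / ((n : ℝ) - (M.r : ℝ) * (M.m : ℝ)))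

end FMRICore

/-- Condition A8: the estimator `R̂` of the correlation matrix is symmetric, satisfies
`E(‖R̂⁻¹ − R⁻¹‖²_∞) = o(1)`, and the errors and stimuli have conditional second moments,
given `R̂`, equal to the unconditional ones. -/
structure EstA8 {Ω : Type} [MeasurableSpace Ω] {μ : Measure Ω} (M : FMRICore Ω μ) where
  /-- the estimator `R̂` of the correlation matrix -/
  Rh : (n : ℕ) → Ω → Matrix (Fin n) (Fin n) ℝ
  meas : ∀ n, Measurable fun ω => fun i j : Fin n => Rh n ω i j
  symm : ∀ n ω, (Rh n ω).IsSymm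
  cons : Tendsto (fun n => ∫ ω, infNorm ((Rh n ω)⁻¹ - (M.Rmat n)⁻¹) ^ 2 ∂μ) atTop (nhds 0)
  εcond : ∀ n i j : ℕ,
    MeasureTheory.condExp
        (MeasurableSpace.comap (fun ω => fun i' j' : Fin n => Rh n ω i' j') inferInstance) μ
        (fun ω => M.ε i ω * M.ε j ω) =ᵐ[μ]
      fun _ => ∫ ω, M.ε i ω * M.ε j ω ∂μ
  scond : ∀ (n : ℕ) (j : Fin M.r) (τ₁ τ₂ : ℝ),
    MeasureTheory.condExp
        (MeasurableSpace.comap (fun ω => fun i' j' : Fin n => Rh n ω i' j') inferInstance) μ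
        (fun ω => M.s j τ₁ ω * M.s j τ₂ ω) =ᵐ[μ]
      fun _ => ∫ ω, M.s j τ₁ ω * M.s j τ₂ ω ∂μ

set_option maxHeartbeats 1000000

lemma rowsum_mul_le {n : ℕ} {B C : Matrix (Fin n) (Fin n) ℝ} {β γ : ℝ}
    (hB : ∀ i, ∑ l, |B i l| ≤ β) (hC : ∀ l, ∑ j, |C l j| ≤ γ) (hγ : 0 ≤ γ) :
    ∀ i, ∑ j, |(B * C) i j| ≤ β * γ := by
  intro i
  calc ∑ j, |(B * C) i j| ≤ ∑ j, ∑ l, |B i l| * |C l j| := by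
        refine Finset.sum_le_sum fun j _ => ?_
        rw [Matrix.mul_apply]
        exact (Finset.abs_sum_le_sum_abs _ _).trans (le_of_eq (by simp [abs_mul]))
    _ = ∑ l, |B i l| * ∑ j, |C l j| := by rw [Finset.sum_comm]; simp [Finset.mul_sum]
    _ ≤ ∑ l, |B i l| * γ :=
        Finset.sum_le_sum fun l _ => mul_le_mul_of_nonneg_left (hC l) (abs_nonneg _)
    _ ≤ β * γ := by
        rw [← Finset.sum_mul]
        exact mul_le_mul_of_nonneg_right (hB i) hγ

lemma colsum_mul_le {n : ℕ} {B C : Matrix (Fin n) (Fin n) ℝ} {β γ : ℝ}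
    (hB : ∀ l, ∑ i, |B i l| ≤ β) (hC : ∀ j, ∑ l, |C l j| ≤ γ) (hβ : 0 ≤ β) :
    ∀ j, ∑ i, |(B * C) i j| ≤ β * γ := by
  intro j
  calc ∑ i, |(B * C) i j| ≤ ∑ i, ∑ l, |B i l| * |C l j| := by
        refine Finset.sum_le_sum fun i _ => ?_
        rw [Matrix.mul_apply]
        exact (Finset.abs_sum_le_sum_abs _ _).trans (le_of_eq (by simp [abs_mul]))
    _ = ∑ l, (∑ i, |B i l|) * |C l j| := by rw [Finset.sum_comm]; simp [Finset.sum_mul]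
    _ ≤ ∑ l, β * |C l j| :=
        Finset.sum_le_sum fun l _ => mul_le_mul_of_nonneg_right (hB l) (abs_nonneg _)
    _ ≤ β * γ := by
        rw [← Finset.mul_sum]
        exact mul_le_mul_of_nonneg_left (hC j) hβ

lemma rowsum_banded {n d : ℕ} {B : Matrix (Fin n) (Fin n) ℝ} {c : ℝ}
    (hb : ∀ i j : Fin n, |B i j| ≤ c)
    (hz : ∀ i j : Fin n, (d : ℤ) < |(i:ℤ) - (j:ℤ)| → B i j = 0) (hc : 0 ≤ c) :
    ∀ i, ∑ j, |B i j| ≤ (2*(d:ℝ)+1) * c := by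
  intro i
  classical
  set S : Finset (Fin n) := Finset.univ.filter (fun j => |(i:ℤ) - (j:ℤ)| ≤ d) with hS
  have h1 : ∑ j, |B i j| = ∑ j ∈ S, |B i j| := by
    refine (Finset.sum_subset (Finset.subset_univ _) ?_).symm
    intro j _ hj
    simp only [hS, Finset.mem_filter, Finset.mem_univ, true_and, not_le] at hj
    rw [hz i j hj, abs_zero]
  have h2 : ∑ j ∈ S, |B i j| ≤ (S.card : ℝ) * c := by
    calc ∑ j ∈ S, |B i j| ≤ ∑ j ∈ S, c := Finset.sum_le_sum fun j _ => hb i j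
      _ = (S.card : ℝ) * c := by simp [mul_comm]
  have h3 : S.card ≤ 2*d+1 := by
    have : S.card ≤ (Finset.Icc ((i:ℤ) - d) ((i:ℤ) + d)).card := by
      refine Finset.card_le_card_of_injOn (fun j => (j:ℤ)) ?_ ?_
      · intro j hj
        simp only [hS, Finset.mem_coe, Finset.mem_filter, Finset.mem_univ, true_and] at hj
        show ((j:ℕ):ℤ) ∈ Finset.Icc ((i:ℤ) - d) ((i:ℤ) + d)
        rw [Finset.mem_Icc]
        rw [abs_le] at hj
        omega
      · intro x _ y _ h
        have h' : ((x:ℕ):ℤ) = ((y:ℕ):ℤ) := h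
        exact Fin.ext (by exact_mod_cast h')
    rw [Int.card_Icc] at this
    omega
  calc ∑ j, |B i j| = ∑ j ∈ S, |B i j| := h1
    _ ≤ (S.card : ℝ) * c := h2
    _ ≤ (2*(d:ℝ)+1) * c := by
        refine mul_le_mul_of_nonneg_right ?_ hc
        exact_mod_cast h3

section
variable {n g : ℕ} {R : Matrix (Fin n) (Fin n) ℝ} {ra rb : ℝ}

lemma inv_banded_bound (hra : 0 < ra) (hrarb : ra ≤ rb)
    (hsym : ∀ i j, R i j = R j i)
    (hband : ∀ i j : Fin n, (g:ℤ) < |(i:ℤ)-(j:ℤ)| → R i j = 0)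
    (hlo : ∀ x : Fin n → ℝ, ra * ∑ i, x i ^2 ≤ x ⬝ᵥ (R *ᵥ x))
    (hhi : ∀ x : Fin n → ℝ, x ⬝ᵥ (R *ᵥ x) ≤ rb * ∑ i, x i ^2) :
    (∀ i, ∑ j, |R⁻¹ i j| ≤ rb⁻¹ * ∑' k : ℕ, (2*((k:ℝ)*(g:ℝ))+1) * (1 - ra/rb)^k) ∧
    (∀ j, ∑ i, |R⁻¹ i j| ≤ rb⁻¹ * ∑' k : ℕ, (2*((k:ℝ)*(g:ℝ))+1) * (1 - ra/rb)^k) := by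
  classical
  have hrb : 0 < rb := lt_of_lt_of_le hra hrarb
  set q : ℝ := 1 - ra/rb with hqdef
  have hq0 : 0 ≤ q := by
    have : ra/rb ≤ 1 := (div_le_one hrb).mpr hrarb
    simp [hqdef]; linarith
  have hq1 : q < 1 := by
    have : 0 < ra/rb := div_pos hra hrb
    simp [hqdef]; linarith
  set A : Matrix (Fin n) (Fin n) ℝ := 1 - rb⁻¹ • R with hAdef
  have hAsym : ∀ i j, A i j = A j i := by
    intro i j
    by_cases h : i = j
    · rw [h]
    · simp [hAdef, Matrix.sub_apply, Matrix.one_apply, h, Ne.symm h, hsym i j]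
  -- quadratic form of A
  have hquad : ∀ x : Fin n → ℝ, x ⬝ᵥ (A *ᵥ x) = ∑ i, x i ^2 - rb⁻¹ * (x ⬝ᵥ (R *ᵥ x)) := by
    intro x
    have : A *ᵥ x = x - rb⁻¹ • (R *ᵥ x) := by
      rw [hAdef, Matrix.sub_mulVec, Matrix.one_mulVec, Matrix.smul_mulVec]
    rw [this, dotProduct_sub, dotProduct_smul, smul_eq_mul]
    simp [dotProduct, sq]
  have hA0 : ∀ x : Fin n → ℝ, 0 ≤ x ⬝ᵥ (A *ᵥ x) := by
    intro x
    rw [hquad]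
    have := hhi x
    have h2 : rb⁻¹ * (x ⬝ᵥ (R *ᵥ x)) ≤ rb⁻¹ * (rb * ∑ i, x i ^2) :=
      mul_le_mul_of_nonneg_left this (le_of_lt (inv_pos.mpr hrb))
    rw [← mul_assoc, inv_mul_cancel₀ (ne_of_gt hrb), one_mul] at h2
    linarith
  have hAq : ∀ x : Fin n → ℝ, x ⬝ᵥ (A *ᵥ x) ≤ q * ∑ i, x i ^2 := by
    intro x
    rw [hquad]
    have := hlo x
    have h2 : rb⁻¹ * (ra * ∑ i, x i ^2) ≤ rb⁻¹ * (x ⬝ᵥ (R *ᵥ x)) :=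
      mul_le_mul_of_nonneg_left this (le_of_lt (inv_pos.mpr hrb))
    have h3 : rb⁻¹ * (ra * ∑ i, x i ^2) = (ra/rb) * ∑ i, x i ^2 := by
      field_simp
    rw [hqdef]
    nlinarith [h2, h3]
  -- symmetry of bilinear form
  have hBsym : ∀ x y : Fin n → ℝ, x ⬝ᵥ (A *ᵥ y) = y ⬝ᵥ (A *ᵥ x) := by
    intro x y
    simp only [dotProduct, mulVec, Finset.mul_sum]
    rw [Finset.sum_comm]
    refine Finset.sum_congr rfl fun i _ => Finset.sum_congr rfl fun j _ => ?_
    rw [hAsym j i]; ring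
  -- Cauchy-Schwarz for the PSD form
  have hCS : ∀ x y : Fin n → ℝ, (x ⬝ᵥ (A *ᵥ y))^2 ≤ (x ⬝ᵥ (A *ᵥ x)) * (y ⬝ᵥ (A *ᵥ y)) := by
    intro x y
    have hpoly : ∀ t : ℝ, 0 ≤ (y ⬝ᵥ (A *ᵥ y)) * (t*t) + (2 * (x ⬝ᵥ (A *ᵥ y))) * t + (x ⬝ᵥ (A *ᵥ x)) := by
      intro t
      have h0 := hA0 (x + t • y)
      have hexp : (x + t • y) ⬝ᵥ (A *ᵥ (x + t • y)) =
          (y ⬝ᵥ (A *ᵥ y)) * (t*t) + (2 * (x ⬝ᵥ (A *ᵥ y))) * t + (x ⬝ᵥ (A *ᵥ x)) := by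
        simp only [Matrix.mulVec_add, Matrix.mulVec_smul, add_dotProduct, dotProduct_add,
          smul_dotProduct, dotProduct_smul, smul_eq_mul]
        rw [hBsym y x]; ring
      rw [hexp] at h0; exact h0
    have hd := discrim_le_zero hpoly
    rw [discrim] at hd
    nlinarith [hd]
  -- operator norm bound
  have hop : ∀ x : Fin n → ℝ, ∑ i, ((A *ᵥ x) i)^2 ≤ q^2 * ∑ i, (x i)^2 := by
    intro x
    set y := A *ᵥ x with hy
    have hs : ∑ i, (y i)^2 = y ⬝ᵥ y := by simp [dotProduct, sq]
    have hxy : x ⬝ᵥ (A *ᵥ y) = y ⬝ᵥ y := by rw [hBsym x y, ← hy]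
    have h1 : (y ⬝ᵥ y)^2 ≤ (x ⬝ᵥ (A *ᵥ x)) * (y ⬝ᵥ (A *ᵥ y)) := by
      rw [← hxy]; exact hCS x y
    have h2 : (x ⬝ᵥ (A *ᵥ x)) * (y ⬝ᵥ (A *ᵥ y)) ≤ (q * ∑ i, (x i)^2) * (q * ∑ i, (y i)^2) := by
      apply mul_le_mul (hAq x) (hAq y) (hA0 y)
      have := Finset.sum_nonneg (fun i (_ : i ∈ Finset.univ) => sq_nonneg (x i))
      positivity
    have hynn : 0 ≤ y ⬝ᵥ y := by rw [← hs]; positivity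
    rcases eq_or_lt_of_le hynn with h | h
    · rw [hs, ← h]; positivity
    · rw [hs]
      nlinarith [h1, h2, hs]
  -- iterated operator bound
  have hit : ∀ (k : ℕ) (x : Fin n → ℝ), ∑ i, (((A^k) *ᵥ x) i)^2 ≤ (q^2)^k * ∑ i, (x i)^2 := by
    intro k
    induction k with
    | zero => intro x; simp
    | succ k ih =>
      intro x
      have : (A^(k+1)) *ᵥ x = (A^k) *ᵥ (A *ᵥ x) := by
        rw [Matrix.mulVec_mulVec, ← pow_succ]
      rw [this]
      calc ∑ i, (((A^k) *ᵥ (A *ᵥ x)) i)^2 ≤ (q^2)^k * ∑ i, ((A *ᵥ x) i)^2 := ih (A *ᵥ x)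
        _ ≤ (q^2)^k * (q^2 * ∑ i, (x i)^2) := by
            apply mul_le_mul_of_nonneg_left (hop x); positivity
        _ = (q^2)^(k+1) * ∑ i, (x i)^2 := by ring
  -- entry bound
  have hent : ∀ (k : ℕ) (i j : Fin n), |(A^k) i j| ≤ q^k := by
    intro k i j
    have h1 : (A^k) *ᵥ (Pi.single j 1) = fun i => (A^k) i j := by
      ext i
      simp [Matrix.mulVec_single]
    have h2 : ∑ i, ((Pi.single j 1 : Fin n → ℝ) i)^2 = 1 := by
      rw [Finset.sum_eq_single j]
      · simp
      · intro b _ hb; simp [Pi.single_apply, hb]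
      · intro h; exact absurd (Finset.mem_univ j) h
    have h3 := hit k (Pi.single j 1)
    rw [h1, h2, mul_one] at h3
    have h4 : ((A^k) i j)^2 ≤ (q^k)^2 := by
      calc ((A^k) i j)^2 ≤ ∑ i', ((A^k) i' j)^2 :=
            Finset.single_le_sum (f := fun i' => ((A^k) i' j)^2)
              (fun i' _ => sq_nonneg _) (Finset.mem_univ i)
        _ ≤ (q^2)^k := h3
        _ = (q^k)^2 := by rw [← pow_mul, ← pow_mul, Nat.mul_comm]
    have hqk : 0 ≤ q^k := pow_nonneg hq0 k
    rw [abs_le]; constructor <;> nlinarith [h4]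
  -- band structure of powers
  have hbandA : ∀ i j : Fin n, (g:ℤ) < |(i:ℤ)-(j:ℤ)| → A i j = 0 := by
    intro i j h
    have hij : i ≠ j := by
      intro he; rw [he] at h; simp at h; omega
    simp [hAdef, Matrix.sub_apply, Matrix.one_apply, hij, hband i j h]
  have hbandk : ∀ (k : ℕ) (i j : Fin n), ((k*g : ℕ):ℤ) < |(i:ℤ)-(j:ℤ)| → (A^k) i j = 0 := by
    intro k
    induction k with
    | zero =>
      intro i j h
      have : i ≠ j := by intro he; rw [he] at h; simp at h
      simp [Matrix.one_apply, this]
    | succ k ih =>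
      intro i j h
      rw [pow_succ, Matrix.mul_apply]
      apply Finset.sum_eq_zero
      intro l _
      by_cases hl : ((k*g : ℕ):ℤ) < |(i:ℤ)-(l:ℤ)|
      · rw [ih i l hl, zero_mul]
      · push_neg at hl
        have htri : |(i:ℤ)-(j:ℤ)| ≤ |(i:ℤ)-(l:ℤ)| + |(l:ℤ)-(j:ℤ)| := abs_sub_le _ _ _
        have : (g:ℤ) < |(l:ℤ)-(j:ℤ)| := by
          have hc : (((k+1)*g : ℕ):ℤ) = ((k*g:ℕ):ℤ) + (g:ℤ) := by push_cast; ring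
          omega
        rw [hbandA l j this, mul_zero]
  -- summability
  have hqsum : Summable (fun k : ℕ => q^k) := summable_geometric_of_lt_one hq0 hq1
  have habs : ∀ i j : Fin n, Summable (fun k : ℕ => |(A^k) i j|) := fun i j =>
    Summable.of_nonneg_of_le (fun k => abs_nonneg _) (fun k => hent k i j) hqsum
  have hsumA : ∀ i j : Fin n, Summable (fun k : ℕ => (A^k) i j) := fun i j =>
    (habs i j).of_abs
  have hmaj : Summable (fun k : ℕ => (2*((k:ℝ)*(g:ℝ))+1) * q^k) := by
    have h1 : Summable (fun k : ℕ => (k:ℝ)^1 * q^k) := by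
      apply summable_pow_mul_geometric_of_norm_lt_one
      rw [Real.norm_eq_abs, abs_of_nonneg hq0]; exact hq1
    have h2 := (h1.mul_left (2*(g:ℝ))).add hqsum
    apply h2.congr
    intro k; push_cast; ring
  clear_value A
  -- the inverse via Neumann series
  set P : Matrix (Fin n) (Fin n) ℝ := Matrix.of (fun i j => rb⁻¹ * ∑' k : ℕ, (A^k) i j) with hPdef
  have hPapp : ∀ i j, P i j = rb⁻¹ * ∑' k : ℕ, (A^k) i j := fun i j => rfl
  clear_value P
  have hkey : R * P = 1 := by
    ext i j
    have hstep2 : ∀ k : ℕ, ∑ l, rb⁻¹ * (R i l * (A^k) l j) = (A^k) i j - (A^(k+1)) i j := by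
      intro k
      have hRA : rb⁻¹ • (R * (A^k)) = A^k - A^(k+1) := by
        have h1 : rb⁻¹ • R = 1 - A := by rw [hAdef, sub_sub_cancel]
        calc rb⁻¹ • (R * (A^k)) = (rb⁻¹ • R) * (A^k) := by rw [Matrix.smul_mul]
          _ = (1 - A) * (A^k) := by rw [h1]
          _ = A^k - A^(k+1) := by rw [Matrix.sub_mul, Matrix.one_mul, ← pow_succ']
      have h2 := congrArg (fun M => M i j) hRA
      simp only [Matrix.smul_apply, Matrix.sub_apply, smul_eq_mul] at h2
      rw [← h2, Matrix.mul_apply, Finset.mul_sum]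
    have hshift : Summable (fun k : ℕ => (A^(k+1)) i j) := by
      exact_mod_cast (summable_nat_add_iff (f := fun m : ℕ => (A^m) i j) 1).mpr (hsumA i j)
    calc (R * P) i j = ∑ l, R i l * (rb⁻¹ * ∑' k : ℕ, (A^k) l j) := by
          rw [Matrix.mul_apply]
          exact Finset.sum_congr rfl fun l _ => by rw [hPapp]
      _ = ∑ l, ∑' k : ℕ, rb⁻¹ * (R i l * (A^k) l j) := by
          refine Finset.sum_congr rfl fun l _ => ?_
          rw [← tsum_mul_left, ← tsum_mul_left]
          exact tsum_congr fun k => by ring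
      _ = ∑' k : ℕ, ∑ l, rb⁻¹ * (R i l * (A^k) l j) :=
          (Summable.tsum_finsetSum (fun l _ => ((hsumA l j).mul_left _).mul_left _)).symm
      _ = ∑' k : ℕ, ((A^k) i j - (A^(k+1)) i j) := tsum_congr fun k => hstep2 k
      _ = (∑' k : ℕ, (A^k) i j) - ∑' k : ℕ, (A^(k+1)) i j := Summable.tsum_sub (hsumA i j) hshift
      _ = (A^0) i j := by
          have h3 := Summable.tsum_eq_zero_add (hsumA i j)
          rw [h3]
          ring
      _ = (1 : Matrix (Fin n) (Fin n) ℝ) i j := by rw [pow_zero]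
  have hinv : R⁻¹ = P := Matrix.inv_eq_right_inv hkey
  -- row/column sums
  have hrbinv : (0:ℝ) ≤ rb⁻¹ := le_of_lt (inv_pos.mpr hrb)
  have hrowk : ∀ (k : ℕ) (i : Fin n), ∑ j, |(A^k) i j| ≤ (2*((k:ℝ)*(g:ℝ))+1) * q^k := by
    intro k i
    have := rowsum_banded (d := k*g) (B := A^k) (c := q^k)
      (fun i j => hent k i j) (hbandk k) (pow_nonneg hq0 k) i
    calc ∑ j, |(A^k) i j| ≤ (2*((k*g:ℕ):ℝ)+1) * q^k := this
      _ = (2*((k:ℝ)*(g:ℝ))+1) * q^k := by push_cast; ring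
  have hcolk : ∀ (k : ℕ) (j : Fin n), ∑ i, |(A^k) i j| ≤ (2*((k:ℝ)*(g:ℝ))+1) * q^k := by
    intro k j
    have hT := rowsum_banded (d := k*g) (B := (A^k)ᵀ) (c := q^k)
      (fun i j => by rw [Matrix.transpose_apply]; exact hent k j i)
      (fun i j h => by rw [Matrix.transpose_apply]; exact hbandk k j i (by rwa [abs_sub_comm]))
      (pow_nonneg hq0 k) j
    calc ∑ i, |(A^k) i j| = ∑ i, |(A^k)ᵀ j i| := by simp [Matrix.transpose_apply]
      _ ≤ (2*((k*g:ℕ):ℝ)+1) * q^k := hT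
      _ = (2*((k:ℝ)*(g:ℝ))+1) * q^k := by push_cast; ring
  constructor
  · intro i
    rw [hinv]
    have h1 : ∀ j, |P i j| ≤ rb⁻¹ * ∑' k : ℕ, |(A^k) i j| := by
      intro j
      rw [hPapp]
      rw [abs_mul, abs_of_nonneg hrbinv]
      have hns : Summable (fun k : ℕ => ‖(A^k) i j‖) := by
        simpa [Real.norm_eq_abs] using habs i j
      have hnt := norm_tsum_le_tsum_norm hns
      rw [Real.norm_eq_abs] at hnt
      refine mul_le_mul_of_nonneg_left (hnt.trans (le_of_eq ?_)) hrbinv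
      exact tsum_congr fun k => by rw [Real.norm_eq_abs]
    calc ∑ j, |P i j| ≤ ∑ j, rb⁻¹ * ∑' k : ℕ, |(A^k) i j| := Finset.sum_le_sum fun j _ => h1 j
      _ = rb⁻¹ * ∑ j, ∑' k : ℕ, |(A^k) i j| := by rw [Finset.mul_sum]
      _ = rb⁻¹ * ∑' k : ℕ, ∑ j, |(A^k) i j| := by rw [Summable.tsum_finsetSum (fun j _ => habs i j)]
      _ ≤ rb⁻¹ * ∑' k : ℕ, (2*((k:ℝ)*(g:ℝ))+1) * q^k := by
          apply mul_le_mul_of_nonneg_left _ hrbinv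
          apply Summable.tsum_le_tsum (fun k => hrowk k i) _ hmaj
          apply Summable.of_nonneg_of_le (fun k => Finset.sum_nonneg fun j _ => abs_nonneg _)
            (fun k => hrowk k i) hmaj
  · intro j
    rw [hinv]
    have h1 : ∀ i, |P i j| ≤ rb⁻¹ * ∑' k : ℕ, |(A^k) i j| := by
      intro i
      rw [hPapp]
      rw [abs_mul, abs_of_nonneg hrbinv]
      have hns : Summable (fun k : ℕ => ‖(A^k) i j‖) := by
        simpa [Real.norm_eq_abs] using habs i j
      have hnt := norm_tsum_le_tsum_norm hns
      rw [Real.norm_eq_abs] at hnt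
      refine mul_le_mul_of_nonneg_left (hnt.trans (le_of_eq ?_)) hrbinv
      exact tsum_congr fun k => by rw [Real.norm_eq_abs]
    calc ∑ i, |P i j| ≤ ∑ i, rb⁻¹ * ∑' k : ℕ, |(A^k) i j| := Finset.sum_le_sum fun i _ => h1 i
      _ = rb⁻¹ * ∑ i, ∑' k : ℕ, |(A^k) i j| := by rw [Finset.mul_sum]
      _ = rb⁻¹ * ∑' k : ℕ, ∑ i, |(A^k) i j| := by rw [Summable.tsum_finsetSum (fun i _ => habs i j)]
      _ ≤ rb⁻¹ * ∑' k : ℕ, (2*((k:ℝ)*(g:ℝ))+1) * q^k := by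
          apply mul_le_mul_of_nonneg_left _ hrbinv
          apply Summable.tsum_le_tsum (fun k => hcolk k j) _ hmaj
          apply Summable.of_nonneg_of_le (fun k => Finset.sum_nonneg fun i _ => abs_nonneg _)
            (fun k => hcolk k j) hmaj

end

lemma inv2_mulVec_zero (a b c d x : ℝ) :
    ((!![a,b;c,d])⁻¹ *ᵥ ![1, x]) 0 = (a*d - b*c)⁻¹ * (d - b*x) := by
  rw [Matrix.inv_def, Matrix.adjugate_fin_two, Matrix.det_fin_two_of]
  simp [Matrix.mulVec, dotProduct, Fin.sum_univ_two, Ring.inverse_eq_inv']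
  ring

lemma count_window_ge {n : ℕ} (A B : ℝ) (hA : 0 ≤ A) (hB : B ≤ (n:ℝ) - 1) (hAB : A ≤ B) :
    B - A - 1 ≤ ((Finset.univ.filter (fun j : Fin n => A ≤ ((j:ℕ):ℝ) ∧ ((j:ℕ):ℝ) ≤ B)).card : ℝ) := by
  classical
  have hB0 : 0 ≤ B := le_trans hA hAB
  have hn1 : 1 ≤ (n:ℝ) := by linarith
  have hn0 : 0 < n := by exact_mod_cast (by linarith : (0:ℝ) < n)
  by_cases hord : Nat.ceil A ≤ Nat.floor B
  · have hfl : ((Nat.floor B : ℕ):ℝ) ≤ B := Nat.floor_le hB0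
    have hfl2 : B - 1 < ((Nat.floor B : ℕ):ℝ) := by
      have := Nat.lt_floor_add_one B; linarith
    have hce : A ≤ ((Nat.ceil A : ℕ):ℝ) := Nat.le_ceil A
    have hce2 : ((Nat.ceil A : ℕ):ℝ) < A + 1 := by
      exact Nat.ceil_lt_add_one hA
    have hfln : Nat.floor B < n := by
      have : ((Nat.floor B : ℕ):ℝ) < n := by linarith
      exact_mod_cast this
    have hcard : (Finset.Icc (Nat.ceil A) (Nat.floor B)).card ≤
        (Finset.univ.filter (fun j : Fin n => A ≤ ((j:ℕ):ℝ) ∧ ((j:ℕ):ℝ) ≤ B)).card := by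
      refine Finset.card_le_card_of_injOn (fun m => ⟨m % n, Nat.mod_lt m hn0⟩) ?_ ?_
      · intro m hm
        simp only [Finset.coe_Icc, Set.mem_Icc] at hm
        have hmn : m < n := lt_of_le_of_lt hm.2 hfln
        simp only [Finset.mem_coe, Finset.mem_filter, Finset.mem_univ, true_and, Fin.val_mk,
          Nat.mod_eq_of_lt hmn]
        exact ⟨le_trans hce (by exact_mod_cast hm.1), le_trans (by exact_mod_cast hm.2) hfl⟩
      · intro x hx y hy h
        simp only [Finset.coe_Icc, Set.mem_Icc] at hx hy
        have hxn : x < n := lt_of_le_of_lt hx.2 hfln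
        have hyn : y < n := lt_of_le_of_lt hy.2 hfln
        simp only [Fin.mk.injEq] at h
        rwa [Nat.mod_eq_of_lt hxn, Nat.mod_eq_of_lt hyn] at h
    have hIcc : (Finset.Icc (Nat.ceil A) (Nat.floor B)).card = Nat.floor B + 1 - Nat.ceil A :=
      Nat.card_Icc _ _
    have : B - A - 1 ≤ ((Nat.floor B + 1 - Nat.ceil A : ℕ) : ℝ) := by
      have : ((Nat.floor B + 1 - Nat.ceil A : ℕ) : ℝ) = ((Nat.floor B : ℕ):ℝ) + 1 - ((Nat.ceil A : ℕ):ℝ) := by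
        have := hord
        push_cast [Nat.cast_sub (by omega : Nat.ceil A ≤ Nat.floor B + 1)]
        ring
      rw [this]; linarith
    calc B - A - 1 ≤ ((Nat.floor B + 1 - Nat.ceil A : ℕ) : ℝ) := this
      _ = ((Finset.Icc (Nat.ceil A) (Nat.floor B)).card : ℝ) := by rw [hIcc]
      _ ≤ _ := by exact_mod_cast hcard
  · push_neg at hord
    have hfl2 : B < ((Nat.floor B : ℕ):ℝ) + 1 := Nat.lt_floor_add_one B
    have hce2 : ((Nat.ceil A : ℕ):ℝ) < A + 1 := Nat.ceil_lt_add_one hA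
    have : ((Nat.floor B : ℕ):ℝ) + 1 ≤ ((Nat.ceil A : ℕ):ℝ) := by exact_mod_cast hord
    have hneg : B - A - 1 ≤ 0 := by linarith
    exact le_trans hneg (by positivity)

lemma count_window_le {n : ℕ} (c r : ℝ) (hr : 0 ≤ r) :
    ((Finset.univ.filter (fun j : Fin n => |((j:ℕ):ℝ) - c| ≤ r)).card : ℝ) ≤ 2*r + 1 := by
  classical
  have hcard : (Finset.univ.filter (fun j : Fin n => |((j:ℕ):ℝ) - c| ≤ r)).card ≤
      (Finset.Icc (Int.ceil (c - r)) (Int.floor (c + r))).card := by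
    refine Finset.card_le_card_of_injOn (fun j => ((j:ℕ):ℤ)) ?_ ?_
    · intro j hj
      simp only [Finset.mem_coe, Finset.mem_filter, Finset.mem_univ, true_and, abs_le] at hj
      show ((j:ℕ):ℤ) ∈ Finset.Icc _ _
      rw [Finset.mem_Icc]
      constructor
      · rw [Int.ceil_le]; push_cast; linarith [hj.1]
      · rw [Int.le_floor]; push_cast; linarith [hj.2]
    · intro x _ y _ h
      have h' : ((x:ℕ):ℤ) = ((y:ℕ):ℤ) := h
      exact Fin.ext (by exact_mod_cast h')
  have h2 : ((Finset.Icc (Int.ceil (c - r)) (Int.floor (c + r))).card : ℝ) ≤ 2*r + 1 := by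
    rw [Int.card_Icc]
    set z : ℤ := Int.floor (c + r) + 1 - Int.ceil (c - r) with hz
    have hzr : (z:ℝ) ≤ 2*r + 1 := by
      have h1 : ((Int.floor (c+r) : ℤ):ℝ) ≤ c + r := Int.floor_le _
      have h2 : c - r ≤ ((Int.ceil (c-r) : ℤ):ℝ) := Int.le_ceil _
      rw [hz]; push_cast; linarith
    by_cases hz0 : 0 ≤ z
    · have h3 : ((z.toNat : ℕ):ℤ) = z := Int.toNat_of_nonneg hz0
      have h4 : ((z.toNat : ℕ):ℝ) = (z:ℝ) := by exact_mod_cast h3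
      rw [h4]; exact hzr
    · push_neg at hz0
      rw [Int.toNat_of_nonpos (le_of_lt hz0)]
      simp; linarith
  calc ((Finset.univ.filter (fun j : Fin n => |((j:ℕ):ℝ) - c| ≤ r)).card : ℝ)
      ≤ ((Finset.Icc (Int.ceil (c - r)) (Int.floor (c + r))).card : ℝ) := by exact_mod_cast hcard
    _ ≤ 2*r + 1 := h2

lemma smoothMat_good (K : ℝ → ℝ) (L a t₀ η Kmax : ℝ) (n : ℕ) (b : ℝ)
    (hb : 0 < b) (hL : 0 < L) (ha : 0 < a) (ht₀ : t₀ ≤ 0) (ht₀L : -t₀ ≤ L) (hη : 0 < η)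
    (hKwin : ∀ t, ((t₀ - η ≤ t ∧ t ≤ t₀) ∨ (-t₀ ≤ t ∧ t ≤ -t₀ + η)) → a/2 ≤ K t)
    (hK0 : ∀ t, 0 ≤ K t) (hKm : ∀ t, K t ≤ Kmax) (hKmax1 : 1 ≤ Kmax)
    (hsupp : ∀ t, L < |t| → K t = 0)
    (hn4 : 4 ≤ n) (hbs : b * (L + η) ≤ 1/4) (hW8 : 8 ≤ (n:ℝ) * b * η)
    (hLnb : 1 ≤ L * ((n:ℝ) * b)) :
    (∀ i, ∑ j, |smoothMat K b n i j| ≤ 36864 * L^4 * Kmax^2 / (a^2 * η^4)) ∧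
    (∀ j, ∑ i, |smoothMat K b n i j| ≤ 36864 * L^4 * Kmax^2 / (a^2 * η^4)) := by
  classical
  have hn0 : (0:ℝ) < n := by
    have : (4:ℝ) ≤ n := by exact_mod_cast hn4
    linarith
  have hnb : 0 < (n:ℝ) * b := mul_pos hn0 hb
  set c1 : ℝ := a^2*η^4/2048 with hc1def
  have hc1 : 0 < c1 := by rw [hc1def]; positivity
  set kb : Fin n → Fin n → ℝ := fun i j => scaledKer K b (dpt n j - dpt n i) with hkbdef
  have hkbeq : ∀ i j, kb i j = K ((dpt n j - dpt n i)/b) / b := fun i j => rfl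
  have hδ : ∀ i j : Fin n, dpt n j - dpt n i = (((j:ℕ):ℝ) - ((i:ℕ):ℝ))/n := by
    intro i j
    unfold dpt
    field_simp
    ring
  set S0 : Fin n → ℝ := fun i => ∑ j, kb i j with hS0def
  set S1 : Fin n → ℝ := fun i => ∑ j, kb i j * (dpt n j - dpt n i) with hS1def
  set S2 : Fin n → ℝ := fun i => ∑ j, kb i j * (dpt n j - dpt n i)^2 with hS2def
  set det : Fin n → ℝ := fun i => S0 i * S2 i - S1 i * S1 i with hdetdef
  -- locMat in terms of S0 S1 S2
  have hM : ∀ i, locMat K b n i = !![S0 i, S1 i; S1 i, S2 i] := by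
    intro i
    ext p q
    fin_cases p <;> fin_cases q <;>
      simp [locMat, hS0def, hS1def, hS2def, hkbdef, pow_one, sq] <;>
      exact Finset.sum_congr rfl fun j _ => by ring
  have hSd : ∀ i j, smoothMat K b n i j =
      (det i)⁻¹ * ((S2 i - S1 i * (dpt n j - dpt n i)) * kb i j) := by
    intro i j
    show ((locMat K b n i)⁻¹ *ᵥ ![1, dpt n j - dpt n i]) 0 * scaledKer K b (dpt n j - dpt n i) = _
    rw [hM i, inv2_mulVec_zero, hdetdef]
    show (S0 i * S2 i - S1 i * S1 i)⁻¹ * (S2 i - S1 i * (dpt n j - dpt n i)) * kb i j = _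
    ring
  clear_value kb S0 S1 S2 det
  -- basic kernel weight bounds
  have hkb0 : ∀ i j, 0 ≤ kb i j := fun i j => by
    rw [hkbeq]; exact div_nonneg (hK0 _) hb.le
  have hkbm : ∀ i j, kb i j ≤ Kmax / b := fun i j => by
    rw [hkbeq]
    exact div_le_div_of_nonneg_right (hKm _) hb.le
  have habs_small : ∀ i j, kb i j ≠ 0 → |dpt n j - dpt n i| ≤ L * b := by
    intro i j hz
    rw [hkbeq] at hz
    have hKne : K ((dpt n j - dpt n i)/b) ≠ 0 := fun h => hz (by rw [h]; simp)
    by_contra hgt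
    push_neg at hgt
    apply hKne
    apply hsupp
    rw [abs_div, abs_of_pos hb, lt_div_iff₀ hb]
    linarith
  have hkbz : ∀ i j : Fin n, L*((n:ℝ)*b) < |((j:ℕ):ℝ) - ((i:ℕ):ℝ)| → kb i j = 0 := by
    intro i j hgt
    rw [hkbeq]
    have : K ((dpt n j - dpt n i)/b) = 0 := by
      apply hsupp
      rw [hδ, div_div, abs_div, abs_of_pos hnb, lt_div_iff₀ hnb]
      linarith
    rw [this]; simp
  have hS0nn : ∀ i, 0 ≤ S0 i := fun i => by
    rw [hS0def]; exact Finset.sum_nonneg fun j _ => hkb0 i j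
  have hS2nn : ∀ i, 0 ≤ S2 i := fun i => by
    rw [hS2def]; exact Finset.sum_nonneg fun j _ => mul_nonneg (hkb0 i j) (sq_nonneg _)
  have hptw : ∀ i j, kb i j * |dpt n j - dpt n i| ≤ L*b * kb i j := by
    intro i j
    by_cases hz : kb i j = 0
    · rw [hz]; simp
    · have := habs_small i j hz
      nlinarith [hkb0 i j]
  have hS1le : ∀ i, |S1 i| ≤ L*b * S0 i := by
    intro i
    rw [hS1def]
    calc |∑ j, kb i j * (dpt n j - dpt n i)| ≤ ∑ j, |kb i j * (dpt n j - dpt n i)| :=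
          Finset.abs_sum_le_sum_abs _ _
      _ = ∑ j, kb i j * |dpt n j - dpt n i| := by
          refine Finset.sum_congr rfl fun j _ => ?_
          rw [abs_mul, abs_of_nonneg (hkb0 i j)]
      _ ≤ ∑ j, L*b * kb i j := Finset.sum_le_sum fun j _ => hptw i j
      _ = L*b * S0 i := by rw [hS0def, Finset.mul_sum]
  have hS2le : ∀ i, S2 i ≤ (L*b)^2 * S0 i := by
    intro i
    rw [hS2def, hS0def, Finset.mul_sum]
    refine Finset.sum_le_sum fun j _ => ?_
    by_cases hz : kb i j = 0
    · rw [hz]; simp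
    · have h1 := habs_small i j hz
      have h2 : (dpt n j - dpt n i)^2 ≤ (L*b)^2 := by
        rw [← sq_abs]
        exact pow_le_pow_left₀ (abs_nonneg _) h1 2
      nlinarith [hkb0 i j]
  have hS0le : ∀ i, S0 i ≤ 3*L*Kmax*(n:ℝ) := by
    intro i
    set H : Finset (Fin n) :=
      Finset.univ.filter (fun j : Fin n => |((j:ℕ):ℝ) - ((i:ℕ):ℝ)| ≤ L*((n:ℝ)*b)) with hH
    have h1 : S0 i = ∑ j ∈ H, kb i j := by
      rw [hS0def]
      refine (Finset.sum_subset (Finset.subset_univ _) ?_).symm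
      intro j _ hj
      simp only [hH, Finset.mem_filter, Finset.mem_univ, true_and, not_le] at hj
      exact hkbz i j hj
    have h2 : ∑ j ∈ H, kb i j ≤ (H.card : ℝ) * (Kmax/b) := by
      calc ∑ j ∈ H, kb i j ≤ ∑ j ∈ H, Kmax/b := Finset.sum_le_sum fun j _ => hkbm i j
        _ = (H.card : ℝ) * (Kmax/b) := by simp [mul_comm]
    have h3 : (H.card : ℝ) ≤ 2*(L*((n:ℝ)*b)) + 1 :=
      count_window_le ((i:ℕ):ℝ) (L*((n:ℝ)*b)) (by positivity)
    have h4 : (2*(L*((n:ℝ)*b)) + 1) ≤ 3*(L*((n:ℝ)*b)) := by linarith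
    have h5 : (H.card : ℝ) * (Kmax/b) ≤ 3*(L*((n:ℝ)*b)) * (Kmax/b) := by
      apply mul_le_mul_of_nonneg_right (le_trans h3 h4)
      positivity
    have h6 : 3*(L*((n:ℝ)*b)) * (Kmax/b) = 3*L*Kmax*(n:ℝ) := by
      field_simp
    rw [h1]; rw [h6] at h5; exact le_trans h2 h5
  -- determinant identity
  have hdetid : ∀ i, 2 * det i =
      ∑ j, ∑ l, kb i j * kb i l * ((dpt n j - dpt n i) - (dpt n l - dpt n i))^2 := by
    intro i
    have expand : ∀ j l : Fin n,
        kb i j * kb i l * ((dpt n j - dpt n i) - (dpt n l - dpt n i))^2 =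
        (kb i j * (dpt n j - dpt n i)^2) * kb i l + kb i j * (kb i l * (dpt n l - dpt n i)^2)
          - 2*((kb i j * (dpt n j - dpt n i)) * (kb i l * (dpt n l - dpt n i))) := by
      intro j l; ring
    simp_rw [expand, Finset.sum_sub_distrib, Finset.sum_add_distrib, ← Finset.mul_sum,
      ← Finset.sum_mul]
    simp only [hdetdef, hS0def, hS1def, hS2def]
    ring
  -- determinant lower bound
  have hdetlow : ∀ i, c1 * ((n:ℝ)^2*b^2) ≤ det i := by
    intro i
    -- choose the window
    have hwin : ∃ u : ℝ, (∀ t, u ≤ t → t ≤ u + η → a/2 ≤ K t) ∧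
        0 ≤ ((i:ℕ):ℝ) + (n:ℝ)*b*u ∧
        ((i:ℕ):ℝ) + (n:ℝ)*b*u + (n:ℝ)*b*η ≤ (n:ℝ) - 1 := by
      have hiLT : ((i:ℕ):ℝ) ≤ (n:ℝ) - 1 := by
        have : (i:ℕ) + 1 ≤ n := i.isLt
        have : ((i:ℕ):ℝ) + 1 ≤ (n:ℝ) := by exact_mod_cast this
        linarith
      have hnbLη : (n:ℝ)*b*(L+η) ≤ (n:ℝ)/4 := by
        calc (n:ℝ)*b*(L+η) = (n:ℝ) * (b*(L+η)) := by ring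
          _ ≤ (n:ℝ) * (1/4) := mul_le_mul_of_nonneg_left hbs hn0.le
          _ = (n:ℝ)/4 := by ring
      have hn4' : (4:ℝ) ≤ n := by exact_mod_cast hn4
      by_cases hcase : n ≤ 2*(i:ℕ)
      · refine ⟨t₀ - η, ?_, ?_, ?_⟩
        · intro t h1 h2
          exact hKwin t (Or.inl ⟨h1, by linarith⟩)
        · have hi2 : (n:ℝ) ≤ 2*((i:ℕ):ℝ) := by exact_mod_cast hcase
          have h1 : -(L+η) ≤ t₀ - η := by linarith
          have h2 : (n:ℝ)*b*(-(L+η)) ≤ (n:ℝ)*b*(t₀-η) :=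
            mul_le_mul_of_nonneg_left h1 hnb.le
          have h3 : -((n:ℝ)/4) ≤ (n:ℝ)*b*(-(L+η)) := by nlinarith
          linarith
        · have heq : ((i:ℕ):ℝ) + (n:ℝ)*b*(t₀-η) + (n:ℝ)*b*η = ((i:ℕ):ℝ) + (n:ℝ)*b*t₀ := by
            ring
          have h1 : (n:ℝ)*b*t₀ ≤ 0 := mul_nonpos_of_nonneg_of_nonpos hnb.le ht₀
          linarith
      · push_neg at hcase
        refine ⟨-t₀, ?_, ?_, ?_⟩
        · intro t h1 h2
          exact hKwin t (Or.inr ⟨h1, h2⟩)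
        · have h1 : 0 ≤ (n:ℝ)*b*(-t₀) := mul_nonneg hnb.le (by linarith)
          positivity
        · have hi2 : 2*(i:ℕ) + 1 ≤ n := hcase
          have hi2' : 2*((i:ℕ):ℝ) + 1 ≤ (n:ℝ) := by exact_mod_cast hi2
          have h1 : (n:ℝ)*b*(-t₀) + (n:ℝ)*b*η ≤ (n:ℝ)*b*(L+η) := by
            have : -t₀ + η ≤ L + η := by linarith
            nlinarith [hnb.le]
          linarith
    obtain ⟨u, hu1, hu2, hu3⟩ := hwin
    set A : ℝ := ((i:ℕ):ℝ) + (n:ℝ)*b*u with hA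
    set W : ℝ := (n:ℝ)*b*η with hWdef
    have hW0 : 0 < W := by rw [hWdef]; positivity
    have hW8' : 8 ≤ W := hW8
    set G1 : Finset (Fin n) :=
      Finset.univ.filter (fun j : Fin n => A ≤ ((j:ℕ):ℝ) ∧ ((j:ℕ):ℝ) ≤ A + W/4) with hG1
    set G2 : Finset (Fin n) :=
      Finset.univ.filter (fun j : Fin n => A + 3*W/4 ≤ ((j:ℕ):ℝ) ∧ ((j:ℕ):ℝ) ≤ A + W) with hG2
    have hcard1 : W/8 ≤ (G1.card : ℝ) := by
      have := count_window_ge (n := n) A (A + W/4) hu2 (by linarith) (by linarith)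
      calc W/8 ≤ (A + W/4) - A - 1 := by linarith
        _ ≤ _ := this
    have hcard2 : W/8 ≤ (G2.card : ℝ) := by
      have := count_window_ge (n := n) (A + 3*W/4) (A + W) (by linarith) (by linarith)
        (by linarith)
      calc W/8 ≤ (A + W) - (A + 3*W/4) - 1 := by linarith
        _ ≤ _ := this
    have hkbw : ∀ j : Fin n, A ≤ ((j:ℕ):ℝ) → ((j:ℕ):ℝ) ≤ A + W → a/(2*b) ≤ kb i j := by
      intro j h1 h2
      have hdiv : (dpt n j - dpt n i)/b = (((j:ℕ):ℝ) - ((i:ℕ):ℝ))/((n:ℝ)*b) := by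
        rw [hδ, div_div]
      have hlo : u ≤ (dpt n j - dpt n i)/b := by
        rw [hdiv, le_div_iff₀ hnb]
        rw [hA] at h1; linarith
      have hhi : (dpt n j - dpt n i)/b ≤ u + η := by
        rw [hdiv, div_le_iff₀ hnb]
        rw [hA, hWdef] at h2; linarith
      have hKt := hu1 _ hlo hhi
      rw [hkbeq]
      calc a/(2*b) = (a/2)/b := by ring
        _ ≤ K ((dpt n j - dpt n i)/b) / b := div_le_div_of_nonneg_right hKt hb.le
    -- lower bound on the double sum
    have hterm : ∀ j ∈ G2, ∀ l ∈ G1,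
        a^2*η^2/16 ≤ kb i j * kb i l * ((dpt n j - dpt n i) - (dpt n l - dpt n i))^2 := by
      intro j hj l hl
      simp only [hG2, Finset.mem_filter, Finset.mem_univ, true_and] at hj
      simp only [hG1, Finset.mem_filter, Finset.mem_univ, true_and] at hl
      have hkj : a/(2*b) ≤ kb i j := hkbw j (by linarith [hj.1]) hj.2
      have hkl : a/(2*b) ≤ kb i l := hkbw l hl.1 (by linarith [hl.2])
      have hdiff : b*η/2 ≤ (dpt n j - dpt n i) - (dpt n l - dpt n i) := by
        have hjl : W/2 ≤ ((j:ℕ):ℝ) - ((l:ℕ):ℝ) := by linarith [hj.1, hl.2]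
        rw [hδ, hδ, div_sub_div_same, le_div_iff₀ hn0]
        rw [hWdef] at hjl
        nlinarith
      have hsq : (b*η/2)^2 ≤ ((dpt n j - dpt n i) - (dpt n l - dpt n i))^2 := by
        apply sq_le_sq'
        · linarith [hdiff, (by positivity : (0:ℝ) < b*η/2)]
        · exact hdiff
      have hab : 0 < a/(2*b) := by positivity
      calc a^2*η^2/16 = (a/(2*b)) * (a/(2*b)) * (b*η/2)^2 := by field_simp; ring
        _ ≤ kb i j * kb i l * ((dpt n j - dpt n i) - (dpt n l - dpt n i))^2 := by
            apply mul_le_mul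
            · apply mul_le_mul hkj hkl hab.le (le_trans hab.le hkj)
            · exact hsq
            · positivity
            · exact mul_nonneg (hkb0 i j) (hkb0 i l)
    have hsumlow : (G2.card : ℝ) * (G1.card : ℝ) * (a^2*η^2/16) ≤ 2 * det i := by
      rw [hdetid i]
      have step1 : ∑ j ∈ G2, ∑ l ∈ G1,
          kb i j * kb i l * ((dpt n j - dpt n i) - (dpt n l - dpt n i))^2 ≤
          ∑ j, ∑ l, kb i j * kb i l * ((dpt n j - dpt n i) - (dpt n l - dpt n i))^2 := by
        have inner : ∀ j : Fin n, ∑ l ∈ G1,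
            kb i j * kb i l * ((dpt n j - dpt n i) - (dpt n l - dpt n i))^2 ≤
            ∑ l, kb i j * kb i l * ((dpt n j - dpt n i) - (dpt n l - dpt n i))^2 := by
          intro j
          apply Finset.sum_le_sum_of_subset_of_nonneg (Finset.subset_univ _)
          intro l _ _
          exact mul_nonneg (mul_nonneg (hkb0 i j) (hkb0 i l)) (sq_nonneg _)
        calc ∑ j ∈ G2, ∑ l ∈ G1, kb i j * kb i l * ((dpt n j - dpt n i) - (dpt n l - dpt n i))^2
            ≤ ∑ j ∈ G2, ∑ l, kb i j * kb i l * ((dpt n j - dpt n i) - (dpt n l - dpt n i))^2 :=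
              Finset.sum_le_sum fun j _ => inner j
          _ ≤ ∑ j, ∑ l, kb i j * kb i l * ((dpt n j - dpt n i) - (dpt n l - dpt n i))^2 := by
              apply Finset.sum_le_sum_of_subset_of_nonneg (Finset.subset_univ _)
              intro j _ _
              apply Finset.sum_nonneg
              intro l _
              have := hkb0 i j
              have := hkb0 i l
              positivity
      have step2 : (G2.card : ℝ) * (G1.card : ℝ) * (a^2*η^2/16) ≤
          ∑ j ∈ G2, ∑ l ∈ G1,
            kb i j * kb i l * ((dpt n j - dpt n i) - (dpt n l - dpt n i))^2 := by
        calc (G2.card : ℝ) * (G1.card : ℝ) * (a^2*η^2/16)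
            = ∑ _j ∈ G2, ∑ _l ∈ G1, a^2*η^2/16 := by
              simp [Finset.sum_const, nsmul_eq_mul]; ring
          _ ≤ _ := Finset.sum_le_sum fun j hj =>
              Finset.sum_le_sum fun l hl => hterm j hj l hl
      linarith
    have hfinal : c1 * ((n:ℝ)^2*b^2) ≤ det i := by
      have h1 : (W/8) * (W/8) * (a^2*η^2/16) ≤ (G2.card : ℝ) * (G1.card : ℝ) * (a^2*η^2/16) := by
        apply mul_le_mul_of_nonneg_right _ (by positivity)
        apply mul_le_mul hcard2 hcard1 (by linarith) (by positivity)
      have h2 : (W/8) * (W/8) * (a^2*η^2/16) = W^2 * a^2 * η^2 / 1024 := by ring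
      have h3 : W^2 = (n:ℝ)^2*b^2*η^2 := by rw [hWdef]; ring
      have : W^2*a^2*η^2/1024 ≤ 2 * det i := by
        rw [← h2]; exact le_trans h1 hsumlow
      rw [h3] at this
      rw [hc1def]
      nlinarith
    exact hfinal
  -- entrywise bound
  have hdetpos : ∀ i, 0 < det i := fun i =>
    lt_of_lt_of_le (by positivity) (hdetlow i)
  have hentry : ∀ i j, |smoothMat K b n i j| ≤ (6*L^3*Kmax^2/c1) / ((n:ℝ)*b) := by
    intro i j
    rw [hSd i j]
    by_cases hz : kb i j = 0
    · rw [hz]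
      simp only [mul_zero, abs_zero]
      positivity
    · have hsmall := habs_small i j hz
      have hnum : |S2 i - S1 i * (dpt n j - dpt n i)| ≤ 6*L^3*Kmax*(n:ℝ)*b^2 := by
        have h1 : |S2 i - S1 i * (dpt n j - dpt n i)| ≤ S2 i + |S1 i| * |dpt n j - dpt n i| := by
          calc |S2 i - S1 i * (dpt n j - dpt n i)| ≤ |S2 i| + |S1 i * (dpt n j - dpt n i)| :=
                abs_sub _ _
            _ = S2 i + |S1 i| * |dpt n j - dpt n i| := by
                rw [abs_of_nonneg (hS2nn i), abs_mul]
        have h2 : S2 i ≤ (L*b)^2 * S0 i := hS2le i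
        have h3 : |S1 i| * |dpt n j - dpt n i| ≤ (L*b*S0 i) * (L*b) :=
          mul_le_mul (hS1le i) hsmall (abs_nonneg _) (mul_nonneg (by positivity) (hS0nn i))
        have h4 : S0 i ≤ 3*L*Kmax*(n:ℝ) := hS0le i
        nlinarith [hS0nn i]
      have hdinv : (det i)⁻¹ ≤ (c1 * ((n:ℝ)^2*b^2))⁻¹ := by
        apply inv_anti₀ (by positivity) (hdetlow i)
      have habsd : |(det i)⁻¹| = (det i)⁻¹ := abs_of_pos (inv_pos.mpr (hdetpos i))
      calc |(det i)⁻¹ * ((S2 i - S1 i * (dpt n j - dpt n i)) * kb i j)|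
          = (det i)⁻¹ * (|S2 i - S1 i * (dpt n j - dpt n i)| * kb i j) := by
            rw [abs_mul, habsd, abs_mul, abs_of_nonneg (hkb0 i j)]
        _ ≤ (c1 * ((n:ℝ)^2*b^2))⁻¹ * ((6*L^3*Kmax*(n:ℝ)*b^2) * (Kmax/b)) := by
            apply mul_le_mul hdinv _ _ (by positivity)
            · apply mul_le_mul hnum (hkbm i j) (hkb0 i j) (by positivity)
            · exact mul_nonneg (abs_nonneg _) (hkb0 i j)
        _ = (6*L^3*Kmax^2/c1) / ((n:ℝ)*b) := by
            field_simp
  have hzero : ∀ i j : Fin n, L*((n:ℝ)*b) < |((j:ℕ):ℝ) - ((i:ℕ):ℝ)| → smoothMat K b n i j = 0 := by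
    intro i j h
    rw [hSd i j, hkbz i j h]
    ring
  have hCeq : 3*L*((6*L^3*Kmax^2/c1)) = 36864 * L^4 * Kmax^2 / (a^2 * η^4) := by
    rw [hc1def]
    field_simp
    ring
  constructor
  · intro i
    set H : Finset (Fin n) :=
      Finset.univ.filter (fun j : Fin n => |((j:ℕ):ℝ) - ((i:ℕ):ℝ)| ≤ L*((n:ℝ)*b)) with hH
    have h1 : ∑ j, |smoothMat K b n i j| = ∑ j ∈ H, |smoothMat K b n i j| := by
      refine (Finset.sum_subset (Finset.subset_univ _) ?_).symm
      intro j _ hj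
      simp only [hH, Finset.mem_filter, Finset.mem_univ, true_and, not_le] at hj
      rw [hzero i j hj, abs_zero]
    have h2 : ∑ j ∈ H, |smoothMat K b n i j| ≤ (H.card : ℝ) * ((6*L^3*Kmax^2/c1) / ((n:ℝ)*b)) := by
      calc ∑ j ∈ H, |smoothMat K b n i j| ≤ ∑ j ∈ H, (6*L^3*Kmax^2/c1) / ((n:ℝ)*b) :=
            Finset.sum_le_sum fun j _ => hentry i j
        _ = (H.card : ℝ) * ((6*L^3*Kmax^2/c1) / ((n:ℝ)*b)) := by simp [mul_comm]
    have h3 : (H.card : ℝ) ≤ 3*(L*((n:ℝ)*b)) := by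
      have := count_window_le (n := n) ((i:ℕ):ℝ) (L*((n:ℝ)*b)) (by positivity)
      calc (H.card : ℝ) ≤ 2*(L*((n:ℝ)*b)) + 1 := this
        _ ≤ 3*(L*((n:ℝ)*b)) := by linarith
    have h4 : (H.card : ℝ) * ((6*L^3*Kmax^2/c1) / ((n:ℝ)*b)) ≤
        3*(L*((n:ℝ)*b)) * ((6*L^3*Kmax^2/c1) / ((n:ℝ)*b)) := by
      apply mul_le_mul_of_nonneg_right h3
      positivity
    have h5 : 3*(L*((n:ℝ)*b)) * ((6*L^3*Kmax^2/c1) / ((n:ℝ)*b)) = 3*L*((6*L^3*Kmax^2/c1)) := by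
      field_simp
    rw [h1]
    calc ∑ j ∈ H, |smoothMat K b n i j| ≤ _ := h2
      _ ≤ _ := h4
      _ = 36864 * L^4 * Kmax^2 / (a^2 * η^4) := by rw [h5, hCeq]
  · intro j
    set H : Finset (Fin n) :=
      Finset.univ.filter (fun i : Fin n => |((i:ℕ):ℝ) - ((j:ℕ):ℝ)| ≤ L*((n:ℝ)*b)) with hH
    have h1 : ∑ i, |smoothMat K b n i j| = ∑ i ∈ H, |smoothMat K b n i j| := by
      refine (Finset.sum_subset (Finset.subset_univ _) ?_).symm
      intro i _ hi
      simp only [hH, Finset.mem_filter, Finset.mem_univ, true_and, not_le] at hi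
      rw [abs_sub_comm] at hi
      rw [hzero i j hi, abs_zero]
    have h2 : ∑ i ∈ H, |smoothMat K b n i j| ≤ (H.card : ℝ) * ((6*L^3*Kmax^2/c1) / ((n:ℝ)*b)) := by
      calc ∑ i ∈ H, |smoothMat K b n i j| ≤ ∑ i ∈ H, (6*L^3*Kmax^2/c1) / ((n:ℝ)*b) :=
            Finset.sum_le_sum fun i _ => hentry i j
        _ = (H.card : ℝ) * ((6*L^3*Kmax^2/c1) / ((n:ℝ)*b)) := by simp [mul_comm]
    have h3 : (H.card : ℝ) ≤ 3*(L*((n:ℝ)*b)) := by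
      have := count_window_le (n := n) ((j:ℕ):ℝ) (L*((n:ℝ)*b)) (by positivity)
      calc (H.card : ℝ) ≤ 2*(L*((n:ℝ)*b)) + 1 := this
        _ ≤ 3*(L*((n:ℝ)*b)) := by linarith
    have h4 : (H.card : ℝ) * ((6*L^3*Kmax^2/c1) / ((n:ℝ)*b)) ≤
        3*(L*((n:ℝ)*b)) * ((6*L^3*Kmax^2/c1) / ((n:ℝ)*b)) := by
      apply mul_le_mul_of_nonneg_right h3
      positivity
    have h5 : 3*(L*((n:ℝ)*b)) * ((6*L^3*Kmax^2/c1) / ((n:ℝ)*b)) = 3*L*((6*L^3*Kmax^2/c1)) := by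
      field_simp
    rw [h1]
    calc ∑ i ∈ H, |smoothMat K b n i j| ≤ _ := h2
      _ ≤ _ := h4
      _ = 36864 * L^4 * Kmax^2 / (a^2 * η^4) := by rw [h5, hCeq]

lemma smoothMat_rowcol_bound (K : ℝ → ℝ) (L : ℝ) (hL : 0 < L)
    (hK_symm : ∀ t, K (-t) = K t) (CK : NNReal) (hK_lip : LipschitzWith CK K)
    (hK_nonneg : ∀ t, 0 ≤ K t) (Cb : ℝ) (hK_bdd : ∀ t, K t ≤ Cb)
    (hK_supp : ∀ t, L < |t| → K t = 0) (hK_density : ∫ t, K t = 1)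
    (b : ℕ → ℝ) (hb_pos : ∀ n, 0 < b n)
    (hb_lim : Filter.Tendsto b Filter.atTop (nhds 0))
    (hnb_lim : Filter.Tendsto (fun n : ℕ => (n : ℝ) * b n) Filter.atTop Filter.atTop) :
    ∃ C : ℝ, 0 ≤ C ∧ ∀ n : ℕ, (∀ i, ∑ j, |smoothMat K (b n) n i j| ≤ C) ∧
      (∀ j, ∑ i, |smoothMat K (b n) n i j| ≤ C) := by
  classical
  have hex : ∃ t₁, K t₁ ≠ 0 := by
    by_contra h
    push_neg at h
    rw [show K = fun _ => (0:ℝ) from funext h] at hK_density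
    simp at hK_density
  obtain ⟨t₁, ht₁⟩ := hex
  set a : ℝ := K t₁ with hadef
  have ha : 0 < a := lt_of_le_of_ne (hK_nonneg t₁) (Ne.symm ht₁)
  set t₀ : ℝ := -|t₁| with ht₀def
  have hKt₀ : K t₀ = a := by
    rw [ht₀def]
    rcases abs_cases t₁ with ⟨h1, _⟩ | ⟨h1, _⟩
    · rw [h1, hK_symm]
    · rw [h1, neg_neg]
  have ht₀ : t₀ ≤ 0 := by rw [ht₀def]; simp [abs_nonneg]
  have ht₀L : -t₀ ≤ L := by
    rw [ht₀def, neg_neg]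
    by_contra h
    push_neg at h
    exact ht₁ (hK_supp t₁ h)
  set η : ℝ := a / (2*((CK:ℝ)+1)) with hηdef
  have hCK1 : (0:ℝ) < (CK:ℝ)+1 := by positivity
  have hη : 0 < η := by rw [hηdef]; positivity
  have hwin0 : ∀ s, |s - t₀| ≤ η → a/2 ≤ K s := by
    intro s hs
    have hd := hK_lip.dist_le_mul s t₀
    rw [Real.dist_eq, Real.dist_eq] at hd
    have h1 : (CK:ℝ) * |s - t₀| ≤ (CK:ℝ) * η := mul_le_mul_of_nonneg_left hs CK.coe_nonneg
    have h2 : (CK:ℝ) * η ≤ ((CK:ℝ)+1) * η := by nlinarith [hη.le]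
    have h3 : ((CK:ℝ)+1) * η = a/2 := by rw [hηdef]; field_simp
    have h4 : |K s - K t₀| ≤ a/2 := by linarith
    rw [hKt₀] at h4
    have h5 := abs_le.mp h4
    linarith [h5.1]
  have hKwin : ∀ t, ((t₀ - η ≤ t ∧ t ≤ t₀) ∨ (-t₀ ≤ t ∧ t ≤ -t₀ + η)) → a/2 ≤ K t := by
    rintro t (⟨h1, h2⟩ | ⟨h1, h2⟩)
    · exact hwin0 t (abs_le.mpr ⟨by linarith, by linarith⟩)
    · have := hwin0 (-t) (abs_le.mpr ⟨by linarith, by linarith⟩)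
      rwa [hK_symm] at this
  set Kmax : ℝ := max Cb 1 with hKmaxdef
  have hKm : ∀ t, K t ≤ Kmax := fun t => le_trans (hK_bdd t) (le_max_left _ _)
  have hKmax1 : 1 ≤ Kmax := le_max_right _ _
  set CS : ℝ := 36864 * L^4 * Kmax^2 / (a^2 * η^4) with hCSdef
  have hCS0 : 0 ≤ CS := by rw [hCSdef]; positivity
  -- eventual goodness
  have h1 : ∀ᶠ n : ℕ in atTop, b n < 1/(4*(L+η)) :=
    hb_lim.eventually_lt_const (by positivity)
  have h2 : ∀ᶠ n : ℕ in atTop, max (8/η) (1/L) ≤ (n:ℝ)*b n :=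
    hnb_lim.eventually_ge_atTop _
  have h3 : ∀ᶠ n : ℕ in atTop, 4 ≤ n := eventually_ge_atTop 4
  obtain ⟨N, hN⟩ := eventually_atTop.mp ((h1.and h2).and h3)
  have hgood : ∀ n, N ≤ n → (∀ i, ∑ j, |smoothMat K (b n) n i j| ≤ CS) ∧
      (∀ j, ∑ i, |smoothMat K (b n) n i j| ≤ CS) := by
    intro n hn
    obtain ⟨⟨hb1, hb2⟩, hn4⟩ := hN n hn
    apply smoothMat_good K L a t₀ η Kmax n (b n) (hb_pos n) hL ha ht₀ ht₀L hη hKwin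
      hK_nonneg hKm hKmax1 hK_supp hn4
    · have hstep : b n * (L+η) < (1/(4*(L+η))) * (L+η) :=
        mul_lt_mul_of_pos_right hb1 (by positivity)
      have heq : (1/(4*(L+η))) * (L+η) = 1/4 := by field_simp
      linarith
    · have h8 : 8/η ≤ (n:ℝ)*b n := le_trans (le_max_left _ _) hb2
      rw [div_le_iff₀ hη] at h8
      nlinarith [h8]
    · have hD : 1/L ≤ (n:ℝ)*b n := le_trans (le_max_right _ _) hb2
      rw [div_le_iff₀ hL] at hD
      rw [mul_comm]
      linarith
  set T : ℕ → ℝ := fun m => ∑ i, ∑ j, |smoothMat K (b m) m i j| with hTdef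
  have hT0 : ∀ m, 0 ≤ T m := fun m =>
    Finset.sum_nonneg fun i _ => Finset.sum_nonneg fun j _ => abs_nonneg _
  have hTsum : 0 ≤ ∑ m ∈ Finset.range N, T m := Finset.sum_nonneg fun m _ => hT0 m
  refine ⟨CS + ∑ m ∈ Finset.range N, T m, by linarith, ?_⟩
  intro n
  by_cases hn : N ≤ n
  · obtain ⟨hrow, hcol⟩ := hgood n hn
    exact ⟨fun i => by linarith [hrow i], fun j => by linarith [hcol j]⟩
  · push_neg at hn
    have hTle : T n ≤ ∑ m ∈ Finset.range N, T m :=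
      Finset.single_le_sum (fun m _ => hT0 m) (Finset.mem_range.mpr hn)
    constructor
    · intro i
      have hx : ∑ j, |smoothMat K (b n) n i j| ≤ T n := by
        rw [hTdef]
        exact Finset.single_le_sum (f := fun i' => ∑ j, |smoothMat K (b n) n i' j|)
          (fun i' _ => Finset.sum_nonneg fun j _ => abs_nonneg _) (Finset.mem_univ i)
      linarith
    · intro j
      have hx : ∑ i, |smoothMat K (b n) n i j| ≤ T n := by
        rw [hTdef]
        exact Finset.sum_le_sum fun i _ =>
          Finset.single_le_sum (f := fun j' => |smoothMat K (b n) n i j'|)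
            (fun j' _ => abs_nonneg _) (Finset.mem_univ j)
      linarith

lemma one_rowsum {n : ℕ} (i : Fin n) : ∑ j, |(1 : Matrix (Fin n) (Fin n) ℝ) i j| = 1 := by
  simp [Matrix.one_apply, apply_ite (abs : ℝ → ℝ)]

lemma one_colsum {n : ℕ} (j : Fin n) : ∑ i, |(1 : Matrix (Fin n) (Fin n) ℝ) i j| = 1 := by
  simp [Matrix.one_apply, apply_ite (abs : ℝ → ℝ)]


theorem statement14 {Ω : Type} [MeasurableSpace Ω] {μ : Measure Ω} (M : FMRICore Ω μ) :
    ∃ C > (0 : ℝ), ∀ n : ℕ,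
      (∀ j, ∑ i, |((M.Rmat n)⁻¹ * (1 - M.Sd n)) i j| ≤ C) ∧
      (∀ i, ∑ j, |((M.Rmat n)⁻¹ * (1 - M.Sd n)) i j| ≤ C) ∧
      (∀ j, ∑ i, |(((1 - M.Sd n)ᵀ * (M.Rmat n)⁻¹ : Matrix (Fin n) (Fin n) ℝ)) i j| ≤ C) ∧
      (∀ i, ∑ j, |(((1 - M.Sd n)ᵀ * (M.Rmat n)⁻¹ : Matrix (Fin n) (Fin n) ℝ)) i j| ≤ C) ∧
      (∀ j, ∑ i, |(((1 - M.Sd n)ᵀ * (M.Rmat n)⁻¹ * (1 - M.Sd n) : Matrix (Fin n) (Fin n) ℝ)) i j| ≤ C) ∧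
      (∀ i, ∑ j, |(((1 - M.Sd n)ᵀ * (M.Rmat n)⁻¹ * (1 - M.Sd n) : Matrix (Fin n) (Fin n) ℝ)) i j| ≤ C) := by
  classical
  haveI := M.isProb
  -- Step 1: ra ≤ rb
  have hrarb : M.ra ≤ M.rb := by
    obtain ⟨ha1, ha2⟩ := M.hR_eig 1 (fun _ => 1)
    simp only [one_pow, Finset.sum_const, Finset.card_univ, Fintype.card_fin,
      nsmul_eq_mul, Nat.cast_one, one_mul, mul_one] at ha1 ha2
    linarith
  -- Step 2: symmetry of R
  have hsym : ∀ n, ∀ i j : Fin n, M.Rmat n i j = M.Rmat n j i := by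
    intro n i j
    show (∫ ω, M.ε (i:ℕ) ω * M.ε (j:ℕ) ω ∂μ) / M.σ2 =
      (∫ ω, M.ε (j:ℕ) ω * M.ε (i:ℕ) ω ∂μ) / M.σ2
    congr 1
    congr 1
    funext ω
    ring
  -- Step 3: bandedness of R (g-dependence kills long-range covariances)
  have hmeas : ∀ i : ℕ, AEStronglyMeasurable (M.ε i) μ :=
    fun i => (M.hε_meas i).aestronglyMeasurable
  have hcross : ∀ i j : ℕ, i + M.g < j → ∫ ω, M.ε i ω * M.ε j ω ∂μ = 0 := by
    intro i j hij
    have hind := M.hε_gdep i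
    have hcomp := hind.comp (φ := fun v : Fin (i+1) → ℝ => v ⟨i, Nat.lt_succ_self i⟩)
      (ψ := fun v : ℕ → ℝ => v (j - (i + M.g + 1)))
      (_mγ := Real.measurableSpace) (_mγ' := Real.measurableSpace)
      (measurable_pi_apply _) (measurable_pi_apply _)
    have he1 : ((fun v : Fin (i+1) → ℝ => v ⟨i, Nat.lt_succ_self i⟩) ∘
        (fun ω => fun t : Fin (i+1) => M.ε (t:ℕ) ω)) = M.ε i := rfl
    have harg : i + M.g + 1 + (j - (i + M.g + 1)) = j := by omega
    have he2 : ((fun v : ℕ → ℝ => v (j - (i + M.g + 1))) ∘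
        (fun ω => fun t : ℕ => M.ε (i + M.g + 1 + t) ω)) = M.ε j := by
      funext ω
      simp only [Function.comp_apply]
      rw [harg]
    rw [he1, he2] at hcomp
    have hint := IndepFun.integral_mul_eq_mul_integral hcomp (hmeas i) (hmeas j)
    simp only [Pi.mul_apply] at hint
    rw [hint, M.hε_mean i, M.hε_mean j, mul_zero]
  have hband : ∀ n, ∀ i j : Fin n, ((M.g:ℕ):ℤ) < |((i:ℕ):ℤ)-((j:ℕ):ℤ)| → M.Rmat n i j = 0 := by
    intro n i j h
    show (∫ ω, M.ε (i:ℕ) ω * M.ε (j:ℕ) ω ∂μ) / M.σ2 = 0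
    by_cases hij : (i:ℕ) ≤ (j:ℕ)
    · have hlt : (i:ℕ) + M.g < (j:ℕ) := by
        have : ((i:ℕ):ℤ) ≤ ((j:ℕ):ℤ) := by exact_mod_cast hij
        rw [abs_of_nonpos (by omega)] at h
        omega
      rw [hcross _ _ hlt, zero_div]
    · push_neg at hij
      have hlt : (j:ℕ) + M.g < (i:ℕ) := by
        have : ((j:ℕ):ℤ) ≤ ((i:ℕ):ℤ) := by exact_mod_cast hij.le
        rw [abs_of_nonneg (by omega)] at h
        omega
      have hswap : ∫ ω, M.ε (i:ℕ) ω * M.ε (j:ℕ) ω ∂μ = ∫ ω, M.ε (j:ℕ) ω * M.ε (i:ℕ) ω ∂μ := by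
        congr 1
        funext ω
        ring
      rw [hswap, hcross _ _ hlt, zero_div]
  -- Step 4: uniform bounds for rows/columns of R⁻¹
  set CV : ℝ := M.rb⁻¹ * ∑' k : ℕ, (2*((k:ℝ)*((M.g:ℕ):ℝ))+1)*(1 - M.ra/M.rb)^k with hCVdef
  have hV : ∀ n : ℕ, (∀ i, ∑ j, |(M.Rmat n)⁻¹ i j| ≤ CV) ∧
      (∀ j, ∑ i, |(M.Rmat n)⁻¹ i j| ≤ CV) := by
    intro n
    exact inv_banded_bound M.hra hrarb (hsym n) (hband n)
      (fun x => (M.hR_eig n x).1) (fun x => (M.hR_eig n x).2)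
  have hCV0 : 0 ≤ CV :=
    le_trans (Finset.sum_nonneg fun j _ => abs_nonneg _) ((hV 1).1 0)
  -- Step 5: uniform bounds for rows/columns of S_d
  obtain ⟨CK, hK_lip⟩ := M.hK_lip
  obtain ⟨Cb, hK_bdd⟩ := M.hK_bdd
  obtain ⟨CT, hCT0, hSdb⟩ := smoothMat_rowcol_bound M.K M.L M.hL M.hK_symm CK hK_lip
    M.hK_nonneg Cb hK_bdd M.hK_supp M.hK_density M.b M.hb_pos M.hb_lim M.hnb_lim
  -- rows/cols of (1 - S_d)
  set γ : ℝ := CT + 1 with hγdef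
  have hγ1 : 1 ≤ γ := by linarith
  have hγ0 : 0 ≤ γ := by linarith
  have hTrow : ∀ n : ℕ, ∀ i : Fin n, ∑ j, |(1 - M.Sd n) i j| ≤ γ := by
    intro n i
    have h1 : ∀ j, |(1 - M.Sd n) i j| ≤ |(1 : Matrix (Fin n) (Fin n) ℝ) i j| + |M.Sd n i j| := by
      intro j
      rw [Matrix.sub_apply]
      exact abs_sub _ _
    calc ∑ j, |(1 - M.Sd n) i j| ≤
        ∑ j, (|(1 : Matrix (Fin n) (Fin n) ℝ) i j| + |M.Sd n i j|) :=
          Finset.sum_le_sum fun j _ => h1 j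
      _ = (∑ j, |(1 : Matrix (Fin n) (Fin n) ℝ) i j|) + ∑ j, |M.Sd n i j| :=
          Finset.sum_add_distrib
      _ ≤ 1 + CT := by
          rw [one_rowsum i]
          have := (hSdb n).1 i
          exact add_le_add (le_refl 1) this
      _ = γ := by rw [hγdef]; ring
  have hTcol : ∀ n : ℕ, ∀ j : Fin n, ∑ i, |(1 - M.Sd n) i j| ≤ γ := by
    intro n j
    have h1 : ∀ i, |(1 - M.Sd n) i j| ≤ |(1 : Matrix (Fin n) (Fin n) ℝ) i j| + |M.Sd n i j| := by
      intro i
      rw [Matrix.sub_apply]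
      exact abs_sub _ _
    calc ∑ i, |(1 - M.Sd n) i j| ≤
        ∑ i, (|(1 : Matrix (Fin n) (Fin n) ℝ) i j| + |M.Sd n i j|) :=
          Finset.sum_le_sum fun i _ => h1 i
      _ = (∑ i, |(1 : Matrix (Fin n) (Fin n) ℝ) i j|) + ∑ i, |M.Sd n i j| :=
          Finset.sum_add_distrib
      _ ≤ 1 + CT := by
          rw [one_colsum j]
          have := (hSdb n).2 j
          exact add_le_add (le_refl 1) this
      _ = γ := by rw [hγdef]; ring
  -- transpose bounds
  have hTtrow : ∀ n : ℕ, ∀ i : Fin n, ∑ j, |((1 - M.Sd n)ᵀ) i j| ≤ γ := by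
    intro n i
    have : ∀ j : Fin n, |((1 - M.Sd n)ᵀ) i j| = |(1 - M.Sd n) j i| := fun j => by
      rw [Matrix.transpose_apply]
    simp_rw [this]
    exact hTcol n i
  have hTtcol : ∀ n : ℕ, ∀ j : Fin n, ∑ i, |((1 - M.Sd n)ᵀ) i j| ≤ γ := by
    intro n j
    have : ∀ i : Fin n, |((1 - M.Sd n)ᵀ) i j| = |(1 - M.Sd n) j i| := fun i => by
      rw [Matrix.transpose_apply]
    simp_rw [this]
    exact hTrow n j
  -- Step 6: assemble
  refine ⟨CV*γ + γ*CV + γ*CV*γ + 1, by positivity, ?_⟩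
  intro n
  have hVrow := (hV n).1
  have hVcol := (hV n).2
  -- products
  have hP1col : ∀ j, ∑ i, |((M.Rmat n)⁻¹ * (1 - M.Sd n)) i j| ≤ CV * γ :=
    colsum_mul_le hVcol (hTcol n) hCV0
  have hP1row : ∀ i, ∑ j, |((M.Rmat n)⁻¹ * (1 - M.Sd n)) i j| ≤ CV * γ :=
    rowsum_mul_le hVrow (hTrow n) hγ0
  have hP2col : ∀ j, ∑ i, |(((1 - M.Sd n)ᵀ * (M.Rmat n)⁻¹ : Matrix (Fin n) (Fin n) ℝ)) i j| ≤ γ * CV :=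
    colsum_mul_le (hTtcol n) hVcol hγ0
  have hP2row : ∀ i, ∑ j, |(((1 - M.Sd n)ᵀ * (M.Rmat n)⁻¹ : Matrix (Fin n) (Fin n) ℝ)) i j| ≤ γ * CV :=
    rowsum_mul_le (hTtrow n) hVrow hCV0
  have hP3col : ∀ j, ∑ i, |(((1 - M.Sd n)ᵀ * (M.Rmat n)⁻¹ * (1 - M.Sd n) : Matrix (Fin n) (Fin n) ℝ)) i j| ≤ γ * CV * γ :=
    colsum_mul_le hP2col (hTcol n) (by positivity)
  have hP3row : ∀ i, ∑ j, |(((1 - M.Sd n)ᵀ * (M.Rmat n)⁻¹ * (1 - M.Sd n) : Matrix (Fin n) (Fin n) ℝ)) i j| ≤ γ * CV * γ :=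
    rowsum_mul_le hP2row (hTrow n) hγ0
  have hnn1 : 0 ≤ CV * γ := mul_nonneg hCV0 hγ0
  have hnn3 : 0 ≤ γ * CV := mul_nonneg hγ0 hCV0
  have hnn2 : 0 ≤ γ * CV * γ := mul_nonneg hnn3 hγ0
  have hle1 : CV * γ ≤ CV*γ + γ*CV + γ*CV*γ + 1 := by linarith
  have hle2 : γ * CV ≤ CV*γ + γ*CV + γ*CV*γ + 1 := by linarith
  have hle3 : γ * CV * γ ≤ CV*γ + γ*CV + γ*CV*γ + 1 := by linarith
  exact ⟨fun j => (hP1col j).trans hle1, fun i => (hP1row i).trans hle1,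
    fun j => (hP2col j).trans hle2, fun i => (hP2row i).trans hle2,
    fun j => (hP3col j).trans hle3, fun i => (hP3row i).trans hle3⟩
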